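/- arXiv:1709.07656 — 2 statements merged into one kernel-verified Lean document; each statement's English description precedes it below -/
import Mathlib

section
/- Let $a, b$ be positive continuous even functions on $\mathbb{R}$, $G$ continuous even, $m \ge 0$, and $M > 0$ with $G \ge G(M) = 0$. For $0 \le t < L$, set $G_1 := \sup_{s \in (-m, \max\{m,M\})} G(s)$. Then $\inf_{v \in H^1_m((-L,L))} \mathcal{E}(v,(-L,L)) \le \frac{M^2 + m^2}{\int_t^L 1/a} + 2G_1 \int_t^L b$, where $\mathcal{E}(v,(-L,L)) = \int_{-L}^L \{\frac{1}{2}a v'^2 + b\,G(v)\}dx$ and $H^1_m((-L,L)) = \{v \in H^1((-L,L)) : v(-L) = -m, v(L) = m\}$. -/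
open Set intervalIntegral

set_option maxHeartbeats 1000000

/-- Proposition 5.2. Upper bound on the minimal energy over
`H¹_m((-L,L))`: for `0 ≤ t < L`,
`inf 𝓔 ≤ (M² + m²)/∫ₜᴸ 1/a + 2 G₁ ∫ₜᴸ b`, where `G₁ = sup_{(-m, max{m,M})} G`. -/
theorem stmt_14 (a b G : ℝ → ℝ) (m M L t : ℝ) (hm : 0 ≤ m) (hM : 0 < M)
    (ht : 0 ≤ t) (htL : t < L)
    (hac : Continuous a) (hbc : Continuous b) (hGc : Continuous G)
    (hapos : ∀ x, 0 < a x) (hbpos : ∀ x, 0 < b x)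
    (haeven : ∀ x, a (-x) = a x) (hbeven : ∀ x, b (-x) = b x)
    (hGeven : ∀ s, G (-s) = G s)
    (hGge : ∀ s, 0 ≤ G s) (hGM : G M = 0) :
    sInf {E : ℝ | ∃ v v' : ℝ → ℝ,
        (∀ x ∈ Icc (-L) L, HasDerivWithinAt v (v' x) (Icc (-L) L) x) ∧
        ContinuousOn v' (Icc (-L) L) ∧ v (-L) = -m ∧ v L = m ∧
        E = ∫ x in (-L)..L, ((1/2) * a x * v' x ^ 2 + b x * G (v x))} ≤
      (M ^ 2 + m ^ 2) / (∫ x in t..L, 1 / a x)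
        + 2 * sSup (G '' Ioo (-m) (max m M)) * ∫ x in t..L, b x := by
  have hL0 : 0 < L := lt_of_le_of_lt ht htL
  set I : ℝ := ∫ x in t..L, 1 / a x with hIdef
  set Ib : ℝ := ∫ x in t..L, b x with hIbdef
  set G₁ : ℝ := sSup (G '' Ioo (-m) (max m M)) with hG1def
  set P : ℝ := M ^ 2 + m ^ 2 with hPdef
  have hP : 0 < P := by positivity
  -- minimum of a on [-L, L]
  obtain ⟨x₀, hx₀mem, hx₀min⟩ := isCompact_Icc.exists_isMinOn
    (nonempty_Icc.2 (by linarith : (-L : ℝ) ≤ L)) hac.continuousOn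
  set A : ℝ := a x₀ with hAdef
  have hA : 0 < A := hapos x₀
  have hAle : ∀ x ∈ Icc (-L) L, A ≤ a x := fun x hx => isMinOn_iff.mp hx₀min x hx
  -- continuity / integrability helpers
  have hinva : Continuous fun x => 1 / a x :=
    continuous_const.div hac fun x => (hapos x).ne'
  have hI : 0 < I :=
    intervalIntegral.intervalIntegral_pos_of_pos_on
      (hinva.intervalIntegrable t L) (fun x _ => one_div_pos.2 (hapos x)) htL
  -- sup bound for G on the closed interval
  have hmmax : -m < max m M := lt_of_lt_of_le (by linarith : -m < M) (le_max_right m M)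
  have hGbdd : BddAbove (G '' Ioo (-m) (max m M)) :=
    ((isCompact_Icc.image hGc).bddAbove).mono (image_mono Ioo_subset_Icc_self)
  have hGle : ∀ s ∈ Icc (-m) (max m M), G s ≤ G₁ := by
    intro s hs
    have h1 : G '' closure (Ioo (-m) (max m M)) ⊆ closure (G '' Ioo (-m) (max m M)) :=
      ContinuousOn.image_closure hGc.continuousOn
    rw [closure_Ioo hmmax.ne] at h1
    have h2 : closure (G '' Ioo (-m) (max m M)) ⊆ Iic G₁ :=
      closure_minimal (fun z hz => le_csSup hGbdd hz) isClosed_Iic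
    exact h2 (h1 ⟨s, hs, rfl⟩)
  -- reduce to an ε-approximation
  refine le_of_forall_gt_imp_ge_of_dense fun c hc => ?_
  set ε : ℝ := c - (P / I + 2 * G₁ * Ib) with hεdef
  have hεpos : 0 < ε := sub_pos.2 hc
  -- choice of δ
  set δ : ℝ := min (L - t) (min (A * I / 4) (ε * A * (I * I) / (4 * P))) with hδdef
  have hδpos : 0 < δ :=
    lt_min (by linarith) (lt_min (by positivity) (by positivity))
  have hδ1 : δ ≤ L - t := min_le_left _ _
  have hδ2 : δ ≤ A * I / 4 := le_trans (min_le_right _ _) (min_le_left _ _)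
  have hδ3 : δ ≤ ε * A * (I * I) / (4 * P) := le_trans (min_le_right _ _) (min_le_right _ _)
  -- the ramp functions
  set ψp : ℝ → ℝ := fun y => min 1 (max 0 ((y - t) / δ)) with hψpdef
  set ψm : ℝ → ℝ := fun y => min 1 (max 0 ((-y - t) / δ)) with hψmdef
  have hψpc : Continuous ψp := by
    apply continuous_const.min
    exact continuous_const.max ((continuous_id.sub continuous_const).div_const δ)
  have hψmc : Continuous ψm := by
    apply continuous_const.min
    exact continuous_const.max ((continuous_id.neg.sub continuous_const).div_const δ)
  have hψp0 : ∀ y, 0 ≤ ψp y := fun y => le_min zero_le_one (le_max_left 0 _)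
  have hψp1 : ∀ y, ψp y ≤ 1 := fun y => min_le_left _ _
  have hψm0 : ∀ y, 0 ≤ ψm y := fun y => le_min zero_le_one (le_max_left 0 _)
  have hψm1 : ∀ y, ψm y ≤ 1 := fun y => min_le_left _ _
  have hψpz : ∀ y, y ≤ t → ψp y = 0 := by
    intro y hy
    have h : (y - t) / δ ≤ 0 :=
      div_nonpos_of_nonpos_of_nonneg (by linarith) hδpos.le
    simp only [hψpdef]
    rw [max_eq_left h, min_eq_right zero_le_one]
  have hψmz : ∀ y, -t ≤ y → ψm y = 0 := by
    intro y hy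
    have h : (-y - t) / δ ≤ 0 :=
      div_nonpos_of_nonpos_of_nonneg (by linarith) hδpos.le
    simp only [hψmdef]
    rw [max_eq_left h, min_eq_right zero_le_one]
  have hψpone : ∀ y, t + δ ≤ y → ψp y = 1 := by
    intro y hy
    have h : (1 : ℝ) ≤ (y - t) / δ := (one_le_div hδpos).2 (by linarith)
    simp only [hψpdef]
    rw [max_eq_right (by linarith : (0:ℝ) ≤ (y - t)/δ), min_eq_left h]
  have hpm : ∀ y, ψp y * ψm y = 0 := by
    intro y
    rcases le_total y t with h | h
    · rw [hψpz y h, zero_mul]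
    · rw [hψmz y (by linarith), mul_zero]
  -- basic integrands
  have hfp : Continuous fun y => ψp y / a y := hψpc.div hac fun x => (hapos x).ne'
  have hfm : Continuous fun y => ψm y / a y := hψmc.div hac fun x => (hapos x).ne'
  set J : ℝ := ∫ y in (0 : ℝ)..L, ψp y / a y with hJdef
  -- lower bound on J
  have hK : 0 < I - δ / A := by
    have hs : δ / A ≤ I / 4 := by
      rw [div_le_div_iff₀ hA (by norm_num : (0:ℝ) < 4)]
      nlinarith
    linarith
  have hJK : I - δ / A ≤ J := by
    have h1 : ∫ y in t..t + δ, 1 / a y ≤ δ / A := by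
      have hmono : ∫ y in t..t + δ, 1 / a y ≤ ∫ y in t..t + δ, 1 / A := by
        apply intervalIntegral.integral_mono_on (by linarith)
          (hinva.intervalIntegrable _ _) (intervalIntegrable_const)
        intro x hx
        have hxm : x ∈ Icc (-L) L := ⟨by linarith [hx.1], by linarith [hx.2]⟩
        exact one_div_le_one_div_of_le hA (hAle x hxm)
      have hconst : ∫ y in t..t + δ, (1 : ℝ) / A = δ / A := by
        rw [intervalIntegral.integral_const]
        rw [smul_eq_mul, add_sub_cancel_left, mul_one_div]
      linarith
    have hadj : (∫ y in t..t + δ, 1 / a y) + ∫ y in t + δ..L, 1 / a y = I :=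
      intervalIntegral.integral_add_adjacent_intervals
        (hinva.intervalIntegrable _ _) (hinva.intervalIntegrable _ _)
    have h2 : ∫ y in t + δ..L, 1 / a y ≤ J := by
      have hadj2 : (∫ y in (0:ℝ)..t + δ, ψp y / a y) + ∫ y in t + δ..L, ψp y / a y = J :=
        intervalIntegral.integral_add_adjacent_intervals
          (hfp.intervalIntegrable _ _) (hfp.intervalIntegrable _ _)
      have h3 : 0 ≤ ∫ y in (0:ℝ)..t + δ, ψp y / a y :=
        intervalIntegral.integral_nonneg (by linarith) fun u _ =>
          div_nonneg (hψp0 u) (hapos u).le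
      have h4 : ∫ y in t + δ..L, ψp y / a y = ∫ y in t + δ..L, 1 / a y := by
        apply intervalIntegral.integral_congr
        intro x hx
        rw [uIcc_of_le (by linarith : t + δ ≤ L)] at hx
        show ψp x / a x = 1 / a x
        rw [hψpone x hx.1]
      linarith
    linarith
  have hJ : 0 < J := lt_of_lt_of_le hK hJK
  -- symmetric integral
  have hJ' : ∫ y in (-L)..(0:ℝ), ψm y / a y = J := by
    have hcn := intervalIntegral.integral_comp_neg (a := (0:ℝ)) (b := L)
      (f := fun y => ψm y / a y)
    rw [neg_zero] at hcn
    rw [← hcn, hJdef]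
    apply intervalIntegral.integral_congr
    intro x _
    show ψm (-x) / a (-x) = ψp x / a x
    rw [haeven]
    congr 1
    simp only [hψmdef, hψpdef, neg_neg]
  -- the test function
  set cp : ℝ := (m - M) / J with hcpdef
  set cm : ℝ := (M + m) / J with hcmdef
  set g : ℝ → ℝ := fun y => cp * (ψp y / a y) + cm * (ψm y / a y) with hgdef
  have hgc : Continuous g := (continuous_const.mul hfp).add (continuous_const.mul hfm)
  set v : ℝ → ℝ := fun x => M + ∫ y in (0 : ℝ)..x, g y with hvdef
  have hderiv : ∀ x : ℝ, HasDerivAt v (g x) x := by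
    intro x
    have h := intervalIntegral.integral_hasDerivAt_right
      (hgc.intervalIntegrable 0 x)
      (hgc.stronglyMeasurableAtFilter _ _) hgc.continuousAt
    simpa only [hvdef] using h.const_add M
  have hvcont : Continuous v := by
    rw [continuous_iff_continuousAt]
    exact fun x => (hderiv x).continuousAt
  have hsplit : ∀ p q : ℝ, (∫ y in p..q, g y)
      = cp * (∫ y in p..q, ψp y / a y) + cm * (∫ y in p..q, ψm y / a y) := by
    intro p q
    rw [hgdef]
    rw [intervalIntegral.integral_add (f := fun y => cp * (ψp y / a y)) (g := fun y => cm * (ψm y / a y))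
      ((continuous_const.mul hfp).intervalIntegrable _ _)
      ((continuous_const.mul hfm).intervalIntegrable _ _),
      intervalIntegral.integral_const_mul, intervalIntegral.integral_const_mul]
  have hm0L : ∫ y in (0:ℝ)..L, ψm y / a y = 0 := by
    have heq : ∫ y in (0:ℝ)..L, ψm y / a y = ∫ y in (0:ℝ)..L, (0:ℝ) := by
      apply intervalIntegral.integral_congr
      intro x hx
      rw [uIcc_of_le hL0.le] at hx
      show ψm x / a x = 0
      rw [hψmz x (by linarith [hx.1]), zero_div]
    rw [heq, intervalIntegral.integral_zero]
  have hp0mL : ∫ y in (-L)..(0:ℝ), ψp y / a y = 0 := by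
    have heq : ∫ y in (-L)..(0:ℝ), ψp y / a y = ∫ y in (-L)..(0:ℝ), (0:ℝ) := by
      apply intervalIntegral.integral_congr
      intro x hx
      rw [uIcc_of_le (by linarith : (-L:ℝ) ≤ 0)] at hx
      show ψp x / a x = 0
      rw [hψpz x (by linarith [hx.2]), zero_div]
    rw [heq, intervalIntegral.integral_zero]
  have hvL : v L = m := by
    show M + (∫ y in (0:ℝ)..L, g y) = m
    rw [hsplit, hm0L, mul_zero, add_zero, ← hJdef, hcpdef,
      div_mul_cancel₀ _ hJ.ne']
    ring
  have hvmL : v (-L) = -m := by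
    show M + (∫ y in (0:ℝ)..(-L), g y) = -m
    rw [intervalIntegral.integral_symm (-L) 0, hsplit, hp0mL, mul_zero, zero_add,
      hJ', hcmdef, div_mul_cancel₀ _ hJ.ne']
    ring
  -- v = M on [-t, t]
  have hveq : ∀ x ∈ Icc (-t) t, v x = M := by
    intro x hx
    have hsub : uIcc (0:ℝ) x ⊆ Icc (-t) t :=
      uIcc_subset_Icc ⟨by linarith, ht⟩ ⟨hx.1, hx.2⟩
    have hz : ∫ y in (0:ℝ)..x, g y = 0 := by
      have heq : ∫ y in (0:ℝ)..x, g y = ∫ y in (0:ℝ)..x, (0:ℝ) := by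
        apply intervalIntegral.integral_congr
        intro y hy
        have hy' := hsub hy
        show cp * (ψp y / a y) + cm * (ψm y / a y) = 0
        rw [hψpz y hy'.2, hψmz y hy'.1, zero_div, mul_zero, mul_zero, add_zero]
      rw [heq, intervalIntegral.integral_zero]
    show M + (∫ y in (0:ℝ)..x, g y) = M
    rw [hz, add_zero]
  -- range of v on [t, L]
  have hvmem_r : ∀ x ∈ Icc t L, v x ∈ Icc (-m) (max m M) := by
    intro x hx
    have hx0 : (0:ℝ) ≤ x := le_trans ht hx.1
    set Kx : ℝ := ∫ y in (0:ℝ)..x, ψp y / a y with hKxdef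
    have hKx0 : 0 ≤ Kx :=
      intervalIntegral.integral_nonneg hx0 fun u _ => div_nonneg (hψp0 u) (hapos u).le
    have hKxJ : Kx ≤ J := by
      have hadj : Kx + (∫ y in x..L, ψp y / a y) = J :=
        intervalIntegral.integral_add_adjacent_intervals
          (hfp.intervalIntegrable _ _) (hfp.intervalIntegrable _ _)
      have h2 : 0 ≤ ∫ y in x..L, ψp y / a y :=
        intervalIntegral.integral_nonneg hx.2 fun u _ => div_nonneg (hψp0 u) (hapos u).le
      linarith
    have hzm : ∫ y in (0:ℝ)..x, ψm y / a y = 0 := by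
      have heq : ∫ y in (0:ℝ)..x, ψm y / a y = ∫ y in (0:ℝ)..x, (0:ℝ) := by
        apply intervalIntegral.integral_congr
        intro y hy
        rw [uIcc_of_le hx0] at hy
        show ψm y / a y = 0
        rw [hψmz y (by linarith [hy.1]), zero_div]
      rw [heq, intervalIntegral.integral_zero]
    have hvx : v x = M + cp * Kx := by
      show M + (∫ y in (0:ℝ)..x, g y) = M + cp * Kx
      rw [hsplit, hzm, mul_zero, add_zero, hKxdef]
    have hcpJ : cp * J = m - M := by
      rw [hcpdef]
      exact div_mul_cancel₀ _ hJ.ne'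
    rcases le_total m M with hmM | hmM
    · have hcp : cp ≤ 0 := by
        rw [hcpdef]
        exact div_nonpos_of_nonpos_of_nonneg (by linarith) hJ.le
      have hmul : cp * J ≤ cp * Kx := mul_le_mul_of_nonpos_left hKxJ hcp
      have hmul2 : cp * Kx ≤ 0 := by
        have h := mul_nonneg (neg_nonneg.2 hcp) hKx0
        rw [neg_mul] at h
        linarith
      constructor
      · rw [hvx]; linarith
      · rw [hvx]
        have hvM : M + cp * Kx ≤ M := by linarith
        exact le_trans hvM (le_max_right m M)
    · have hcp : 0 ≤ cp := by
        rw [hcpdef]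
        exact div_nonneg (by linarith) hJ.le
      have hmul : cp * Kx ≤ cp * J := mul_le_mul_of_nonneg_left hKxJ hcp
      have hmul2 : 0 ≤ cp * Kx := mul_nonneg hcp hKx0
      constructor
      · rw [hvx]; linarith
      · rw [hvx]
        have hvM : M + cp * Kx ≤ m := by linarith
        exact le_trans hvM (le_max_left m M)
  -- range of v on [-L, -t]
  have hvmem_l : ∀ x ∈ Icc (-L) (-t), v x ∈ Icc (-m) (max m M) := by
    intro x hx
    have hx0 : x ≤ 0 := le_trans hx.2 (by linarith)
    set Q : ℝ := ∫ y in x..(0:ℝ), ψm y / a y with hQdef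
    have hQ0 : 0 ≤ Q :=
      intervalIntegral.integral_nonneg hx0 fun u _ => div_nonneg (hψm0 u) (hapos u).le
    have hQJ : Q ≤ J := by
      have hadj : (∫ y in (-L)..x, ψm y / a y) + Q = J := by
        rw [hQdef, intervalIntegral.integral_add_adjacent_intervals
          (hfm.intervalIntegrable _ _) (hfm.intervalIntegrable _ _)]
        exact hJ'
      have h2 : 0 ≤ ∫ y in (-L)..x, ψm y / a y :=
        intervalIntegral.integral_nonneg hx.1 fun u _ => div_nonneg (hψm0 u) (hapos u).le
      linarith
    have hzp : ∫ y in (0:ℝ)..x, ψp y / a y = 0 := by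
      have heq : ∫ y in (0:ℝ)..x, ψp y / a y = ∫ y in (0:ℝ)..x, (0:ℝ) := by
        apply intervalIntegral.integral_congr
        intro y hy
        rw [uIcc_of_ge hx0] at hy
        show ψp y / a y = 0
        rw [hψpz y (by linarith [hy.2]), zero_div]
      rw [heq, intervalIntegral.integral_zero]
    have hvx : v x = M - cm * Q := by
      show M + (∫ y in (0:ℝ)..x, g y) = M - cm * Q
      rw [hsplit, hzp, mul_zero, zero_add, intervalIntegral.integral_symm x 0, ← hQdef]
      ring
    have hcmJ : cm * J = M + m := by
      rw [hcmdef]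
      exact div_mul_cancel₀ _ hJ.ne'
    have hcm : 0 ≤ cm := by
      rw [hcmdef]
      exact div_nonneg (by linarith) hJ.le
    have hmul : cm * Q ≤ cm * J := mul_le_mul_of_nonneg_left hQJ hcm
    have hmul2 : 0 ≤ cm * Q := mul_nonneg hcm hQ0
    constructor
    · rw [hvx]; linarith
    · rw [hvx]
      have hvM : M - cm * Q ≤ M := by linarith
      exact le_trans hvM (le_max_right m M)
  -- the candidate energy
  set E : ℝ := ∫ x in (-L)..L, ((1/2) * a x * g x ^ 2 + b x * G (v x)) with hEdef
  -- membership in the admissible set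
  have hmem : E ∈ {E : ℝ | ∃ v v' : ℝ → ℝ,
      (∀ x ∈ Icc (-L) L, HasDerivWithinAt v (v' x) (Icc (-L) L) x) ∧
      ContinuousOn v' (Icc (-L) L) ∧ v (-L) = -m ∧ v L = m ∧
      E = ∫ x in (-L)..L, ((1/2) * a x * v' x ^ 2 + b x * G (v x))} :=
    ⟨v, g, fun x _ => (hderiv x).hasDerivWithinAt, hgc.continuousOn, hvmL, hvL, hEdef⟩
  -- bounded below by 0
  have hSbdd : BddBelow {E : ℝ | ∃ v v' : ℝ → ℝ,
      (∀ x ∈ Icc (-L) L, HasDerivWithinAt v (v' x) (Icc (-L) L) x) ∧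
      ContinuousOn v' (Icc (-L) L) ∧ v (-L) = -m ∧ v L = m ∧
      E = ∫ x in (-L)..L, ((1/2) * a x * v' x ^ 2 + b x * G (v x))} := by
    refine ⟨0, fun E' hE' => ?_⟩
    obtain ⟨w, w', _, _, _, _, hEq⟩ := hE'
    rw [hEq]
    apply intervalIntegral.integral_nonneg (by linarith : (-L:ℝ) ≤ L)
    intro u _
    have h1 : 0 ≤ (1/2 : ℝ) * a u * w' u ^ 2 :=
      mul_nonneg (mul_nonneg (by norm_num) (hapos u).le) (sq_nonneg _)
    have h2 : 0 ≤ b u * G (w u) := mul_nonneg (hbpos u).le (hGge _)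
    linarith
  -- Dirichlet part pointwise identity
  have hDpt : ∀ x : ℝ, (1/2 : ℝ) * a x * g x ^ 2
      = cp ^ 2 / 2 * (ψp x ^ 2 / a x) + cm ^ 2 / 2 * (ψm x ^ 2 / a x) := by
    intro x
    have ha : a x ≠ 0 := (hapos x).ne'
    have hgx : g x = (cp * ψp x + cm * ψm x) / a x := by
      show cp * (ψp x / a x) + cm * (ψm x / a x) = (cp * ψp x + cm * ψm x) / a x
      rw [mul_div_assoc', mul_div_assoc', ← add_div]
    have hN2 : (cp * ψp x + cm * ψm x) ^ 2 = cp ^ 2 * ψp x ^ 2 + cm ^ 2 * ψm x ^ 2 := by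
      linear_combination (2 * cp * cm) * hpm x
    rw [hgx, div_pow, hN2]
    field_simp
  -- integral bounds on ψ²/a
  have hfp2 : Continuous fun y => ψp y ^ 2 / a y :=
    (hψpc.pow 2).div hac fun x => (hapos x).ne'
  have hfm2 : Continuous fun y => ψm y ^ 2 / a y :=
    (hψmc.pow 2).div hac fun x => (hapos x).ne'
  have hIp : ∫ x in (-L)..L, ψp x ^ 2 / a x ≤ J := by
    have hadj : (∫ x in (-L)..(0:ℝ), ψp x ^ 2 / a x) + ∫ x in (0:ℝ)..L, ψp x ^ 2 / a x
        = ∫ x in (-L)..L, ψp x ^ 2 / a x :=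
      intervalIntegral.integral_add_adjacent_intervals
        (hfp2.intervalIntegrable _ _) (hfp2.intervalIntegrable _ _)
    have h1 : ∫ x in (-L)..(0:ℝ), ψp x ^ 2 / a x = 0 := by
      have heq : ∫ x in (-L)..(0:ℝ), ψp x ^ 2 / a x = ∫ x in (-L)..(0:ℝ), (0:ℝ) := by
        apply intervalIntegral.integral_congr
        intro y hy
        rw [uIcc_of_le (by linarith : (-L:ℝ) ≤ 0)] at hy
        show ψp y ^ 2 / a y = 0
        rw [hψpz y (by linarith [hy.2])]
        simp
      rw [heq, intervalIntegral.integral_zero]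
    have h2 : ∫ x in (0:ℝ)..L, ψp x ^ 2 / a x ≤ J := by
      apply intervalIntegral.integral_mono_on hL0.le
        (hfp2.intervalIntegrable _ _) (hfp.intervalIntegrable _ _)
      intro x _
      have hsq : ψp x ^ 2 ≤ ψp x := by nlinarith [hψp0 x, hψp1 x]
      exact div_le_div_of_nonneg_right hsq (hapos x).le
    linarith
  have hIm : ∫ x in (-L)..L, ψm x ^ 2 / a x ≤ J := by
    have hadj : (∫ x in (-L)..(0:ℝ), ψm x ^ 2 / a x) + ∫ x in (0:ℝ)..L, ψm x ^ 2 / a x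
        = ∫ x in (-L)..L, ψm x ^ 2 / a x :=
      intervalIntegral.integral_add_adjacent_intervals
        (hfm2.intervalIntegrable _ _) (hfm2.intervalIntegrable _ _)
    have h1 : ∫ x in (0:ℝ)..L, ψm x ^ 2 / a x = 0 := by
      have heq : ∫ x in (0:ℝ)..L, ψm x ^ 2 / a x = ∫ x in (0:ℝ)..L, (0:ℝ) := by
        apply intervalIntegral.integral_congr
        intro y hy
        rw [uIcc_of_le hL0.le] at hy
        show ψm y ^ 2 / a y = 0
        rw [hψmz y (by linarith [hy.1])]
        simp
      rw [heq, intervalIntegral.integral_zero]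
    have h2 : ∫ x in (-L)..(0:ℝ), ψm x ^ 2 / a x ≤ J := by
      rw [← hJ']
      apply intervalIntegral.integral_mono_on (by linarith : (-L:ℝ) ≤ 0)
        (hfm2.intervalIntegrable _ _) (hfm.intervalIntegrable _ _)
      intro x _
      have hsq : ψm x ^ 2 ≤ ψm x := by nlinarith [hψm0 x, hψm1 x]
      exact div_le_div_of_nonneg_right hsq (hapos x).le
    linarith
  -- Dirichlet bound
  have hD : ∫ x in (-L)..L, (1/2 : ℝ) * a x * g x ^ 2 ≤ P / J := by
    have heq : ∫ x in (-L)..L, (1/2 : ℝ) * a x * g x ^ 2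
        = cp ^ 2 / 2 * (∫ x in (-L)..L, ψp x ^ 2 / a x)
          + cm ^ 2 / 2 * (∫ x in (-L)..L, ψm x ^ 2 / a x) := by
      rw [← intervalIntegral.integral_const_mul, ← intervalIntegral.integral_const_mul,
        ← intervalIntegral.integral_add (f := fun x => cp ^ 2 / 2 * (ψp x ^ 2 / a x))
          (g := fun x => cm ^ 2 / 2 * (ψm x ^ 2 / a x))
          ((continuous_const.mul hfp2).intervalIntegrable _ _)
          ((continuous_const.mul hfm2).intervalIntegrable _ _)]
      apply intervalIntegral.integral_congr
      intro x _
      exact hDpt x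
    rw [heq]
    have h1 : cp ^ 2 / 2 * (∫ x in (-L)..L, ψp x ^ 2 / a x) ≤ cp ^ 2 / 2 * J :=
      mul_le_mul_of_nonneg_left hIp (by positivity)
    have h2 : cm ^ 2 / 2 * (∫ x in (-L)..L, ψm x ^ 2 / a x) ≤ cm ^ 2 / 2 * J :=
      mul_le_mul_of_nonneg_left hIm (by positivity)
    have h3 : cp ^ 2 / 2 * J + cm ^ 2 / 2 * J = P / J := by
      rw [hcpdef, hcmdef, hPdef]
      field_simp
      ring
    linarith
  -- potential bound
  have hGvc : Continuous fun x => b x * G (v x) := hbc.mul (hGc.comp hvcont)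
  have hIbneg : ∫ x in (-L)..(-t), b x = Ib := by
    have hcn := intervalIntegral.integral_comp_neg (a := t) (b := L) (f := b)
    rw [← hcn, hIbdef]
    apply intervalIntegral.integral_congr
    intro x _
    show b (-x) = b x
    exact hbeven x
  have hPot : ∫ x in (-L)..L, b x * G (v x) ≤ 2 * G₁ * Ib := by
    have hadj1 : (∫ x in (-L)..(-t), b x * G (v x)) + ∫ x in (-t)..L, b x * G (v x)
        = ∫ x in (-L)..L, b x * G (v x) :=
      intervalIntegral.integral_add_adjacent_intervals
        (hGvc.intervalIntegrable _ _) (hGvc.intervalIntegrable _ _)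
    have hadj2 : (∫ x in (-t)..t, b x * G (v x)) + ∫ x in t..L, b x * G (v x)
        = ∫ x in (-t)..L, b x * G (v x) :=
      intervalIntegral.integral_add_adjacent_intervals
        (hGvc.intervalIntegrable _ _) (hGvc.intervalIntegrable _ _)
    have hmid : ∫ x in (-t)..t, b x * G (v x) = 0 := by
      have heq : ∫ x in (-t)..t, b x * G (v x) = ∫ x in (-t)..t, (0:ℝ) := by
        apply intervalIntegral.integral_congr
        intro x hx
        rw [uIcc_of_le (by linarith : -t ≤ t)] at hx
        show b x * G (v x) = 0
        rw [hveq x hx, hGM, mul_zero]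
      rw [heq, intervalIntegral.integral_zero]
    have hright : ∫ x in t..L, b x * G (v x) ≤ G₁ * Ib := by
      rw [hIbdef, ← intervalIntegral.integral_const_mul]
      apply intervalIntegral.integral_mono_on htL.le
        (hGvc.intervalIntegrable _ _) ((continuous_const.mul hbc).intervalIntegrable _ _)
      intro x hx
      show b x * G (v x) ≤ G₁ * b x
      rw [mul_comm G₁ (b x)]
      exact mul_le_mul_of_nonneg_left (hGle _ (hvmem_r x hx)) (hbpos x).le
    have hleft : ∫ x in (-L)..(-t), b x * G (v x) ≤ G₁ * Ib := by
      rw [← hIbneg, ← intervalIntegral.integral_const_mul]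
      apply intervalIntegral.integral_mono_on (by linarith : (-L:ℝ) ≤ -t)
        (hGvc.intervalIntegrable _ _) ((continuous_const.mul hbc).intervalIntegrable _ _)
      intro x hx
      show b x * G (v x) ≤ G₁ * b x
      rw [mul_comm G₁ (b x)]
      exact mul_le_mul_of_nonneg_left (hGle _ (hvmem_l x hx)) (hbpos x).le
    linarith
  -- assemble the energy bound
  have hE : E ≤ P / J + 2 * G₁ * Ib := by
    rw [hEdef, intervalIntegral.integral_add (f := fun x => (1/2 : ℝ) * a x * g x ^ 2)
      (((continuous_const.mul hac).mul (hgc.pow 2)).intervalIntegrable _ _)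
      (hGvc.intervalIntegrable _ _)]
    have h1 := hD
    have h2 := hPot
    linarith
  -- final numeric estimate
  have hfinal : P / J + 2 * G₁ * Ib ≤ c := by
    have hPJ : P / J ≤ P / (I - δ / A) :=
      div_le_div_of_nonneg_left hP.le hK hJK
    have hnum : P / (I - δ / A) ≤ P / I + ε := by
      set s : ℝ := δ / A with hsdef
      have hs0 : 0 < s := div_pos hδpos hA
      have hs4 : s ≤ I / 4 := by
        rw [hsdef, div_le_div_iff₀ hA (by norm_num : (0:ℝ) < 4)]
        nlinarith
      have hsP : P * s ≤ ε * (I * I) / 4 := by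
        have hsle : s ≤ ε * (I * I) / (4 * P) := by
          rw [hsdef, div_le_div_iff₀ hA (by positivity : (0:ℝ) < 4 * P)]
          have h := mul_le_mul_of_nonneg_right hδ3 (by positivity : (0:ℝ) ≤ 4 * P)
          rw [div_mul_cancel₀ _ (by positivity : (4 * P : ℝ) ≠ 0)] at h
          rw [show ε * (I * I) * A = ε * A * (I * I) from by ring]
          exact h
        have h1 : P * s ≤ P * (ε * (I * I) / (4 * P)) :=
          mul_le_mul_of_nonneg_left hsle hP.le
        have h2 : P * (ε * (I * I) / (4 * P)) = ε * (I * I) / 4 := by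
          field_simp
        linarith
      rw [div_le_iff₀ (by linarith : (0:ℝ) < I - s)]
      have hq : P / I * I = P := div_mul_cancel₀ _ hI.ne'
      have hqs : P / I * s ≤ ε * I / 4 := by
        apply le_of_mul_le_mul_right ?_ hI
        calc P / I * s * I = P * s := by rw [mul_right_comm, hq]
          _ ≤ ε * (I * I) / 4 := hsP
          _ = ε * I / 4 * I := by ring
      have hes : ε * s ≤ ε * I / 4 := by
        have h := mul_le_mul_of_nonneg_left hs4 hεpos.le
        rw [show ε * (I / 4) = ε * I / 4 from by ring] at h
        exact h
      have hεI : 0 ≤ ε * I := (mul_pos hεpos hI).le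
      have hexp : (P / I + ε) * (I - s) = P / I * I - P / I * s + ε * I - ε * s := by
        ring
      rw [hexp, hq]
      clear_value s ε P I
      linarith [hqs, hes, hεI]
    have hfin : P / I + ε + 2 * G₁ * Ib = c := by rw [hεdef]; ring
    linarith
  exact le_trans (csInf_le hSbdd hmem) (le_trans hE hfinal)
end

section
/- Let $a, b$ be positive continuous even functions on $\mathbb{R}$ and $G$ continuous even with $G \ge G(M) = 0$ on $\mathbb{R}$ and $G > 0$ on $[0,M)$ for some $M > 0$. Suppose $G(s) \le G(0)$ for all $s \in (0,M)$ and $\sup_{t\in(0,L)}\left(\int_t^L \frac{1}{a}\right)\left(\int_0^t b\right) > \frac{M^2}{2G(0)}$. Then $\inf_{v \in H^1_0((-L,L))} \mathcal{E}(v,(-L,L)) < \mathcal{E}(0,(-L,L))$, i.e. the zero function is not a minimizer of $\mathcal{E}(\cdot,(-L,L))$ among $H^1$ functions vanishing at $\pm L$. -/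
open Set intervalIntegral MeasureTheory

set_option maxHeartbeats 1000000 in

/-- Proposition 5.4 (i). Under the stated sign conditions on `G`
and the condition `sup_{t ∈ (0,L)} (∫ₜᴸ 1/a)(∫₀ᵗ b) > M² / (2 G(0))`, the zero
function is not a minimizer: `inf_{v ∈ H¹₀((-L,L))} 𝓔(v) < 𝓔(0) = ∫ b G(0)`. -/
theorem stmt_19 (a b G : ℝ → ℝ) (M L : ℝ) (hM : 0 < M) (hL : 0 < L)
    (hac : Continuous a) (hbc : Continuous b) (hGc : Continuous G)
    (hapos : ∀ x, 0 < a x) (hbpos : ∀ x, 0 < b x)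
    (haeven : ∀ x, a (-x) = a x) (hbeven : ∀ x, b (-x) = b x)
    (hGeven : ∀ s, G (-s) = G s)
    (hGge : ∀ s, 0 ≤ G s) (hGM : G M = 0) (hGpos : ∀ s ∈ Ico (0:ℝ) M, 0 < G s)
    (hG0 : ∀ s ∈ Ioo (0:ℝ) M, G s ≤ G 0)
    (hcond : ∃ t ∈ Ioo (0:ℝ) L,
      M ^ 2 / (2 * G 0) < (∫ x in t..L, 1 / a x) * ∫ x in (0:ℝ)..t, b x) :
    sInf {E : ℝ | ∃ v v' : ℝ → ℝ,
        (∀ x ∈ Icc (-L) L, HasDerivWithinAt v (v' x) (Icc (-L) L) x) ∧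
        ContinuousOn v' (Icc (-L) L) ∧ v (-L) = 0 ∧ v L = 0 ∧
        E = ∫ x in (-L)..L, ((1/2) * a x * v' x ^ 2 + b x * G (v x))} <
      ∫ x in (-L)..L, b x * G 0 := by
  obtain ⟨t, ⟨ht0, htL⟩, hcnd⟩ := hcond
  have hG0pos : 0 < G 0 := hGpos 0 ⟨le_refl 0, hM⟩
  have hle : -L ≤ L := by linarith
  have hainv : Continuous fun x => 1 / a x :=
    continuous_const.div hac fun x => (hapos x).ne'
  set I : ℝ := ∫ x in t..L, 1 / a x with hIdef
  set B : ℝ := ∫ x in (0:ℝ)..t, b x with hBdef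
  have hIpos : 0 < I :=
    intervalIntegral.intervalIntegral_pos_of_pos_on (hainv.intervalIntegrable t L)
      (fun x _ => by have := hapos x; positivity) htL
  have hBpos : 0 < B :=
    intervalIntegral.intervalIntegral_pos_of_pos_on (hbc.intervalIntegrable 0 t)
      (fun x _ => hbpos x) ht0
  have hM2 : M ^ 2 / I < 2 * G 0 * B := by
    rw [div_lt_iff₀ hIpos]
    have h := (div_lt_iff₀ (by positivity : (0:ℝ) < 2 * G 0)).mp hcnd
    nlinarith
  -- choose n large
  obtain ⟨k, hk⟩ := exists_nat_one_div_lt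
    (show 0 < (2 * G 0 * B - M ^ 2 / I) * I / M ^ 2 by
      have : 0 < 2 * G 0 * B - M ^ 2 / I := by linarith
      positivity)
  set n : ℕ := k + 1 with hndef
  have hnpos : (0:ℝ) < (n:ℝ) := by positivity
  have hfrac : M ^ 2 / I * (((n:ℝ) + 1) / n) < 2 * G 0 * B := by
    have hkk : 1 / ((k:ℝ) + 1) < (2 * G 0 * B - M ^ 2 / I) * I / M ^ 2 := hk
    have hn : (n:ℝ) = (k:ℝ) + 1 := by push_cast [hndef]; ring
    rw [hn]
    have hM2pos : 0 < M ^ 2 / I := by positivity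
    have h1 : M ^ 2 / I * (1 / ((k:ℝ) + 1)) <
        M ^ 2 / I * ((2 * G 0 * B - M ^ 2 / I) * I / M ^ 2) :=
      mul_lt_mul_of_pos_left hkk hM2pos
    have h2 : M ^ 2 / I * ((2 * G 0 * B - M ^ 2 / I) * I / M ^ 2)
        = 2 * G 0 * B - M ^ 2 / I := by
      field_simp
    have h3 : (((k:ℝ) + 1) + 1) / ((k:ℝ) + 1) = 1 + 1 / ((k:ℝ) + 1) := by
      field_simp
    rw [h3]
    nlinarith
  -- the profile function g
  set g : ℝ → ℝ := fun s => max (1 - s ^ n) 0 with hgdef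
  have hgcont : Continuous g := (continuous_const.sub (continuous_pow n)).max continuous_const
  have hgnn : ∀ s, 0 ≤ g s := fun s => le_max_right _ _
  have hgz : ∀ s, 1 ≤ s → g s = 0 := by
    intro s hs
    have h1 : (1:ℝ) ≤ s ^ n := one_le_pow₀ hs
    simp only [hgdef]
    exact max_eq_right (by linarith)
  have hgIcc : ∀ s ∈ Icc (0:ℝ) 1, g s = 1 - s ^ n := by
    intro s hs
    have h1 : s ^ n ≤ 1 := pow_le_one₀ hs.1 hs.2
    simp only [hgdef]
    exact max_eq_left (by linarith)
  -- antiderivatives of g and g²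
  set GG : ℝ → ℝ := fun u => ∫ s in (0:ℝ)..u, g s with hGGdef
  set GQ : ℝ → ℝ := fun u => ∫ s in (0:ℝ)..u, (g s) ^ 2 with hGQdef
  have hGGd : ∀ u, HasDerivAt GG (g u) u := fun u =>
    intervalIntegral.integral_hasDerivAt_right (hgcont.intervalIntegrable _ _)
      (hgcont.stronglyMeasurableAtFilter _ _) hgcont.continuousAt
  have hGQd : ∀ u, HasDerivAt GQ ((g u) ^ 2) u := fun u =>
    intervalIntegral.integral_hasDerivAt_right ((hgcont.pow 2).intervalIntegrable _ _)
      ((hgcont.pow 2).stronglyMeasurableAtFilter _ _) (hgcont.pow 2).continuousAt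
  have hGG0 : GG 0 = 0 := intervalIntegral.integral_same
  have hGQ0 : GQ 0 = 0 := intervalIntegral.integral_same
  have hGG1 : GG 1 = (n:ℝ) / ((n:ℝ) + 1) := by
    have h1 : GG 1 = ∫ s in (0:ℝ)..1, (1 - s ^ n) := by
      refine intervalIntegral.integral_congr fun s hs => ?_
      rw [uIcc_of_le (zero_le_one)] at hs
      exact hgIcc s hs
    rw [h1, intervalIntegral.integral_sub (intervalIntegrable_const)
      ((continuous_pow n).intervalIntegrable _ _), integral_pow]
    simp
    field_simp
    ring
  have hGG1pos : 0 < GG 1 := by rw [hGG1]; positivity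
  have hQle : GQ 1 ≤ GG 1 := by
    refine intervalIntegral.integral_mono_on zero_le_one
      ((hgcont.pow 2).intervalIntegrable _ _) (hgcont.intervalIntegrable _ _) fun s hs => ?_
    have h1 : g s ≤ 1 := by
      rw [hgIcc s hs]
      have : 0 ≤ s ^ n := pow_nonneg hs.1 n
      linarith
    nlinarith [hgnn s]
  have hQnn : 0 ≤ GQ 1 :=
    intervalIntegral.integral_nonneg zero_le_one fun s _ => sq_nonneg _
  -- the function F x = ∫_x^L 1/a
  set F : ℝ → ℝ := fun x => ∫ y in x..L, 1 / a y with hFdef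
  have hFd : ∀ x, HasDerivAt F (-(1 / a x)) x := fun x =>
    intervalIntegral.integral_hasDerivAt_left (hainv.intervalIntegrable _ _)
      (hainv.stronglyMeasurableAtFilter _ _) hainv.continuousAt
  have hFcont : Continuous F := continuous_iff_continuousAt.mpr fun x => (hFd x).continuousAt
  have hFt : F t = I := rfl
  have hFL : F L = 0 := intervalIntegral.integral_same
  have hFmono : ∀ x y : ℝ, x ≤ y → F y ≤ F x := by
    intro x y hxy
    have hadd : (∫ u in x..y, 1 / a u) + (∫ u in y..L, 1 / a u) = ∫ u in x..L, 1 / a u :=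
      intervalIntegral.integral_add_adjacent_intervals (hainv.intervalIntegrable x y)
        (hainv.intervalIntegrable y L)
    have hnn : 0 ≤ ∫ u in x..y, 1 / a u :=
      intervalIntegral.integral_nonneg hxy fun u _ => by have := hapos u; positivity
    simp only [hFdef]
    linarith [hadd]
  have hFIle : ∀ x : ℝ, x ≤ t → 1 ≤ F x / I := fun x hx =>
    (one_le_div hIpos).mpr (hFt ▸ hFmono x t hx)
  -- the function w
  set w : ℝ → ℝ := fun x => g (F x / I) / a x - g (F (-x) / I) / a x with hwdef
  have hwcont : Continuous w := by
    refine Continuous.sub ?_ ?_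
    · exact (hgcont.comp ((hFcont).div_const I)).div hac fun x => (hapos x).ne'
    · exact (hgcont.comp (((hFcont.comp continuous_neg)).div_const I)).div hac
        fun x => (hapos x).ne'
  have hwodd : ∀ x, w (-x) = -w x := by
    intro x
    simp only [hwdef, neg_neg, haeven]
    ring
  have hwright : ∀ x : ℝ, -t ≤ x → w x = g (F x / I) / a x := by
    intro x hx
    have h2 : g (F (-x) / I) = 0 := hgz _ (hFIle (-x) (by linarith))
    simp only [hwdef, h2, zero_div, sub_zero]
  have hwzero : ∀ x : ℝ, -t ≤ x → x ≤ t → w x = 0 := by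
    intro x h1 h2
    rw [hwright x h1, hgz _ (hFIle x h2), zero_div]
  have hwnn : ∀ x : ℝ, -t ≤ x → 0 ≤ w x := by
    intro x hx
    rw [hwright x hx]
    exact div_nonneg (hgnn _) (hapos x).le
  -- normalization
  set N : ℝ := I * GG 1 with hNdef
  have hNpos : 0 < N := mul_pos hIpos hGG1pos
  -- FTC computations on [t, L]
  have hcont1 : Continuous fun y => g (F y / I) / a y :=
    (hgcont.comp (hFcont.div_const I)).div hac fun x => (hapos x).ne'
  have hcont2 : Continuous fun y => (g (F y / I)) ^ 2 / a y :=
    ((hgcont.comp (hFcont.div_const I)).pow 2).div hac fun x => (hapos x).ne'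
  have hchain : ∀ x : ℝ, HasDerivAt (fun y => F y / I) (-(1 / a x) / I) x := fun x =>
    (hFd x).div_const I
  have key1 : (∫ y in t..L, g (F y / I) / a y) = I * GG 1 := by
    have hd : ∀ x ∈ uIcc t L, HasDerivAt (fun y => -(I * GG (F y / I))) (g (F x / I) / a x) x := by
      intro x _
      have h1 : HasDerivAt (fun y => GG (F y / I)) (g (F x / I) * (-(1 / a x) / I)) x :=
        by have := (hGGd (F x / I)).comp x (hchain x); exact this
      have h2 := (h1.const_mul I).neg
      refine h2.congr_deriv ?_
      have hax := (hapos x).ne'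
      have hI := hIpos.ne'
      field_simp
    rw [intervalIntegral.integral_eq_sub_of_hasDerivAt hd (hcont1.intervalIntegrable _ _)]
    rw [hFL, hFt, zero_div, hGG0, div_self hIpos.ne']
    ring
  have key2 : (∫ y in t..L, (g (F y / I)) ^ 2 / a y) = I * GQ 1 := by
    have hd : ∀ x ∈ uIcc t L,
        HasDerivAt (fun y => -(I * GQ (F y / I))) ((g (F x / I)) ^ 2 / a x) x := by
      intro x _
      have h1 : HasDerivAt (fun y => GQ (F y / I)) ((g (F x / I)) ^ 2 * (-(1 / a x) / I)) x :=
        by have := (hGQd (F x / I)).comp x (hchain x); exact this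
      have h2 := (h1.const_mul I).neg
      refine h2.congr_deriv ?_
      have hax := (hapos x).ne'
      have hI := hIpos.ne'
      field_simp
    rw [intervalIntegral.integral_eq_sub_of_hasDerivAt hd (hcont2.intervalIntegrable _ _)]
    rw [hFL, hFt, zero_div, hGQ0, div_self hIpos.ne']
    ring
  have hwint : (∫ y in t..L, w y) = N := by
    rw [hNdef, ← key1]
    refine intervalIntegral.integral_congr fun y hy => ?_
    rw [uIcc_of_le htL.le] at hy
    exact hwright y (by linarith [hy.1])
  -- the test function
  set W : ℝ → ℝ := fun x => ∫ y in x..L, w y with hWdef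
  have hWd : ∀ x, HasDerivAt W (-w x) x := fun x =>
    intervalIntegral.integral_hasDerivAt_left (hwcont.intervalIntegrable _ _)
      (hwcont.stronglyMeasurableAtFilter _ _) hwcont.continuousAt
  have hWcont : Continuous W := continuous_iff_continuousAt.mpr fun x => (hWd x).continuousAt
  have hWL : W L = 0 := intervalIntegral.integral_same
  have hWadj : ∀ x y : ℝ, W x = (∫ u in x..y, w u) + W y := by
    intro x y
    simp only [hWdef]
    exact (intervalIntegral.integral_add_adjacent_intervals (hwcont.intervalIntegrable x y)
      (hwcont.intervalIntegrable y L)).symm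
  have hWt : W t = N := hwint
  have hWplateau : ∀ x : ℝ, -t ≤ x → x ≤ t → W x = N := by
    intro x h0 ht'
    have h1 : (∫ u in x..t, w u) = 0 := by
      have h2 : (∫ u in x..t, w u) = ∫ u in x..t, (0:ℝ) :=
        intervalIntegral.integral_congr fun u hu => by
          rw [uIcc_of_le ht'] at hu
          exact hwzero u (by linarith [hu.1]) hu.2
      rw [h2, intervalIntegral.integral_zero]
    rw [hWadj x t, h1, hWt, zero_add]
  have hWnn : ∀ x : ℝ, t ≤ x → x ≤ L → 0 ≤ W x := by
    intro x h1 h2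
    exact intervalIntegral.integral_nonneg h2 fun u hu => hwnn u (by linarith [hu.1])
  have hWleN : ∀ x : ℝ, t ≤ x → W x ≤ N := by
    intro x h1
    have h2 : 0 ≤ ∫ u in t..x, w u :=
      intervalIntegral.integral_nonneg h1 fun u hu => hwnn u (by linarith [hu.1])
    have h3 := hWadj t x
    rw [hWt] at h3
    linarith
  have hWeven : ∀ x : ℝ, W (-x) = W x := by
    intro x
    have h1 := hWadj (-x) x
    have hcn : (∫ u in (0:ℝ)..x, w (-u)) = ∫ u in (-x)..(0:ℝ), w u := by
      have h := intervalIntegral.integral_comp_neg (a := (0:ℝ)) (b := x) w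
      simpa using h
    have h5 : (∫ u in (0:ℝ)..x, w (-u)) = ∫ u in (0:ℝ)..x, -w u :=
      intervalIntegral.integral_congr fun u _ => hwodd u
    rw [intervalIntegral.integral_neg] at h5
    have h4 : (∫ u in (-x)..(0:ℝ), w u) + (∫ u in (0:ℝ)..x, w u) = ∫ u in (-x)..x, w u :=
      intervalIntegral.integral_add_adjacent_intervals
        (hwcont.intervalIntegrable (-x) 0) (hwcont.intervalIntegrable 0 x)
    have h2 : (∫ u in (-x)..x, w u) = 0 := by
      rw [← h4, ← hcn, h5]
      ring
    rw [h2, zero_add] at h1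
    exact h1
  set v : ℝ → ℝ := fun x => M / N * W x with hvdef
  set v' : ℝ → ℝ := fun x => -(M / N) * w x with hv'def
  have hvd : ∀ x, HasDerivAt v (v' x) x := by
    intro x
    have h1 := (hWd x).const_mul (M / N)
    refine h1.congr_deriv ?_
    simp only [hv'def]
    ring
  have hv'cont : Continuous v' := continuous_const.mul hwcont
  have hvcont : Continuous v := continuous_const.mul hWcont
  have hvL : v L = 0 := by simp only [hvdef, hWL, mul_zero]
  have hvnegL : v (-L) = 0 := by simp only [hvdef, hWeven L, hWL, mul_zero]
  have hveven : ∀ x, v (-x) = v x := fun x => by simp only [hvdef, hWeven x]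
  have hvplateau : ∀ x : ℝ, -t ≤ x → x ≤ t → v x = M := by
    intro x h1 h2
    simp only [hvdef, hWplateau x h1 h2]
    field_simp
  have hvmem : ∀ x : ℝ, t ≤ x → x ≤ L → 0 ≤ v x ∧ v x ≤ M := by
    intro x h1 h2
    constructor
    · exact mul_nonneg (by positivity) (hWnn x h1 h2)
    · have h3 := hWleN x h1
      calc M / N * W x ≤ M / N * N := by
            exact mul_le_mul_of_nonneg_left h3 (by positivity)
        _ = M := by field_simp
  have hGv : ∀ s : ℝ, 0 ≤ s → s ≤ M → G s ≤ G 0 := by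
    intro s h0 hM'
    rcases eq_or_lt_of_le h0 with h | h
    · rw [← h]
    rcases eq_or_lt_of_le hM' with h' | h'
    · rw [h', hGM]; exact hGge 0
    · exact hG0 s ⟨h, h'⟩
  -- the energy integrand
  set f : ℝ → ℝ := fun x => (1/2) * a x * v' x ^ 2 + b x * G (v x) with hfdef
  have hfcont : Continuous f :=
    ((continuous_const.mul hac).mul (hv'cont.pow 2)).add (hbc.mul (hGc.comp hvcont))
  -- reduction to the set infimum
  have hbdd : BddBelow {E : ℝ | ∃ u u' : ℝ → ℝ,
      (∀ x ∈ Icc (-L) L, HasDerivWithinAt u (u' x) (Icc (-L) L) x) ∧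
      ContinuousOn u' (Icc (-L) L) ∧ u (-L) = 0 ∧ u L = 0 ∧
      E = ∫ x in (-L)..L, ((1/2) * a x * u' x ^ 2 + b x * G (u x))} := by
    refine ⟨0, fun E hE => ?_⟩
    obtain ⟨u, u', hud, huc, -, -, rfl⟩ := hE
    refine intervalIntegral.integral_nonneg hle fun x _ => ?_
    have h1 : 0 ≤ (1/2) * a x * u' x ^ 2 := by have := (hapos x).le; positivity
    have h2 : 0 ≤ b x * G (u x) := mul_nonneg (hbpos x).le (hGge _)
    linarith
  have hmem : (∫ x in (-L)..L, f x) ∈ {E : ℝ | ∃ u u' : ℝ → ℝ,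
      (∀ x ∈ Icc (-L) L, HasDerivWithinAt u (u' x) (Icc (-L) L) x) ∧
      ContinuousOn u' (Icc (-L) L) ∧ u (-L) = 0 ∧ u L = 0 ∧
      E = ∫ x in (-L)..L, ((1/2) * a x * u' x ^ 2 + b x * G (u x))} :=
    ⟨v, v', fun x _ => (hvd x).hasDerivWithinAt, hv'cont.continuousOn, hvnegL, hvL, rfl⟩
  refine lt_of_le_of_lt (csInf_le hbdd hmem) ?_
  -- symmetry reductions
  set T : ℝ := ∫ x in t..L, b x with hTdef
  have hfeven : ∀ x, f (-x) = f x := by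
    intro x
    have hv2 : v' (-x) ^ 2 = v' x ^ 2 := by
      simp only [hv'def, hwodd x]
      ring
    simp only [hfdef, haeven, hbeven, hveven, hv2]
  have hEhalf : (∫ x in (-L)..L, f x) = 2 * ∫ x in (0:ℝ)..L, f x := by
    have h4 : (∫ x in (-L)..(0:ℝ), f x) + (∫ x in (0:ℝ)..L, f x) = ∫ x in (-L)..L, f x :=
      intervalIntegral.integral_add_adjacent_intervals (hfcont.intervalIntegrable _ _)
        (hfcont.intervalIntegrable _ _)
    have hcn : (∫ x in (0:ℝ)..L, f (-x)) = ∫ x in (-L)..(0:ℝ), f x := by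
      have h := intervalIntegral.integral_comp_neg (a := (0:ℝ)) (b := L) f
      simpa using h
    have h5 : (∫ x in (0:ℝ)..L, f (-x)) = ∫ x in (0:ℝ)..L, f x :=
      intervalIntegral.integral_congr fun x _ => hfeven x
    linarith
  have hRHS : (∫ x in (-L)..L, b x * G 0) = 2 * (B * G 0) + 2 * (T * G 0) := by
    have h4 : (∫ x in (-L)..(0:ℝ), b x) + (∫ x in (0:ℝ)..L, b x) = ∫ x in (-L)..L, b x :=
      intervalIntegral.integral_add_adjacent_intervals (hbc.intervalIntegrable _ _)
        (hbc.intervalIntegrable _ _)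
    have hcn : (∫ x in (0:ℝ)..L, b (-x)) = ∫ x in (-L)..(0:ℝ), b x := by
      have h := intervalIntegral.integral_comp_neg (a := (0:ℝ)) (b := L) b
      simpa using h
    have h5 : (∫ x in (0:ℝ)..L, b (-x)) = ∫ x in (0:ℝ)..L, b x :=
      intervalIntegral.integral_congr fun x _ => hbeven x
    have h6 : B + T = ∫ x in (0:ℝ)..L, b x :=
      intervalIntegral.integral_add_adjacent_intervals (hbc.intervalIntegrable _ _)
        (hbc.intervalIntegrable _ _)
    have h7 : (∫ x in (-L)..L, b x * G 0) = (∫ x in (-L)..L, b x) * G 0 :=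
      intervalIntegral.integral_mul_const _ _
    have h8 : (∫ x in (-L)..L, b x) = 2 * (B + T) := by linarith
    rw [h7, h8]
    ring
  -- the middle part vanishes
  have hmid : (∫ x in (0:ℝ)..t, f x) = 0 := by
    have h1 : ∀ x ∈ uIcc (0:ℝ) t, f x = (fun _ => (0:ℝ)) x := by
      intro x hx
      rw [uIcc_of_le ht0.le] at hx
      have hw0 : w x = 0 := hwzero x (by linarith [hx.1]) hx.2
      have hvM : v x = M := hvplateau x (by linarith [hx.1]) hx.2
      simp only [hfdef, hv'def]
      rw [hw0, hvM, hGM]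
      ring
    rw [intervalIntegral.integral_congr h1, intervalIntegral.integral_zero]
  -- the right part
  set φ : ℝ → ℝ := fun x => (1/2) * (M/N)^2 * ((g (F x / I))^2 / a x) + b x * G 0 with hphidef
  have hphicont : Continuous φ := (continuous_const.mul hcont2).add (hbc.mul continuous_const)
  have hptw : ∀ x ∈ Icc t L, f x ≤ φ x := by
    intro x hx
    have hwr : w x = g (F x / I) / a x := hwright x (by linarith [hx.1])
    have hterm1 : (1/2) * a x * v' x ^ 2 = (1/2) * (M/N)^2 * ((g (F x / I))^2 / a x) := by
      simp only [hv'def]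
      rw [hwr]
      have hax := (hapos x).ne'
      field_simp
    have hbd := hvmem x hx.1 hx.2
    have hterm2 : b x * G (v x) ≤ b x * G 0 :=
      mul_le_mul_of_nonneg_left (hGv (v x) hbd.1 hbd.2) (hbpos x).le
    simp only [hfdef, hphidef]
    rw [hterm1]
    linarith
  have hrightle : (∫ x in t..L, f x) ≤ (1/2) * (M/N)^2 * (I * GQ 1) + T * G 0 := by
    have h1 : (∫ x in t..L, f x) ≤ ∫ x in t..L, φ x :=
      intervalIntegral.integral_mono_on htL.le (hfcont.intervalIntegrable _ _)
        (hphicont.intervalIntegrable _ _) hptw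
    have h2 : (∫ x in t..L, φ x) = (1/2) * (M/N)^2 * (I * GQ 1) + T * G 0 := by
      simp only [hphidef]
      rw [intervalIntegral.integral_add (f := fun x => (1/2) * (M/N)^2 * ((g (F x / I))^2 / a x))
        (g := fun x => b x * G 0) ((continuous_const.mul hcont2).intervalIntegrable _ _)
        ((hbc.mul continuous_const).intervalIntegrable _ _),
        intervalIntegral.integral_const_mul, intervalIntegral.integral_mul_const, key2]
    linarith
  have hsplit0L : (∫ x in (0:ℝ)..L, f x) = (∫ x in (0:ℝ)..t, f x) + ∫ x in t..L, f x :=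
    (intervalIntegral.integral_add_adjacent_intervals (hfcont.intervalIntegrable _ _)
      (hfcont.intervalIntegrable _ _)).symm
  -- the key estimate
  have hkey : (M/N)^2 * (I * GQ 1) < 2 * (B * G 0) := by
    have e1 : (M/N)^2 * (I * GQ 1) ≤ (M/N)^2 * (I * GG 1) :=
      mul_le_mul_of_nonneg_left (mul_le_mul_of_nonneg_left hQle hIpos.le) (sq_nonneg _)
    have e2 : (M/N)^2 * (I * GG 1) = M^2 / I * (((n:ℝ) + 1) / n) := by
      rw [hNdef, hGG1]
      have h1 : (n:ℝ) ≠ 0 := hnpos.ne'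
      have h2 : ((n:ℝ) + 1) ≠ 0 := by positivity
      field_simp
    nlinarith [hfrac]
  -- conclusion
  rw [hEhalf, hsplit0L, hmid, hRHS]
  nlinarith [hrightle, hkey]
end
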